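/- Region-growing lemma, ball-volume bound: in the region-growing setup (edge version), for all real numbers 0 ≤ a < b one has ∫_a^b c(∂F(ρ)) / ( Vol(ρ) · ln( e·Vol(b) / Vol(ρ) ) ) dρ ≤ ln ln( e·Vol(b) / Vol(a) ). Equivalently, if ρ is chosen uniformly at random from [a,b), then E_ρ[ c(∂F(ρ)) / ( Vol(ρ)·ln(e·Vol(b)/Vol(ρ)) ) ] ≤ (1/(b−a))·ln ln( e·Vol(b)/Vol(a) ). -/

import Mathlib

open scoped Classical

namespace RegionGrow

variable {V : Type*}

/-- The ball `B^S_ℓ(z,ρ)`: vertices of `S` at `ℓ`-distance at most `ρ` from `z`. -/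
noncomputable def ball (ℓ : V → V → ℝ) (S : Finset V) (z : V) (ρ : ℝ) : Finset V :=
  S.filter fun v => ℓ z v ≤ ρ

/-- The boundary `∂^{S,F}_ℓ(z,ρ)`: edges of `F` with both endpoints in `S`, exactly one
of which lies in the ball of radius `ρ` around `z`. -/
noncomputable def bdry (ℓ : V → V → ℝ) (S : Finset V) (F : Finset (V × V)) (z : V) (ρ : ℝ) :
    Finset (V × V) :=
  F.filter fun p => p.1 ∈ S ∧ p.2 ∈ S ∧ ¬ ((ℓ z p.1 ≤ ρ) ↔ (ℓ z p.2 ≤ ρ))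

/-- The volume `𝒱^{S,F}_ℓ(β; z, ρ)`.  For a crossing edge, the endpoint inside the ball
is the one closer to `z`, so its distance to `z` is `min (ℓ z u) (ℓ z v)`. -/
noncomputable def vol (c : V × V → ℝ) (ℓ : V → V → ℝ) (S : Finset V) (F : Finset (V × V))
    (z : V) (β ρ : ℝ) : ℝ :=
  β + ∑ p ∈ F.filter (fun p => p.1 ∈ ball ℓ S z ρ ∧ p.2 ∈ ball ℓ S z ρ), c p * ℓ p.1 p.2
    + ∑ p ∈ bdry ℓ S F z ρ, c p * (ρ - min (ℓ z p.1) (ℓ z p.2))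

/-- The complementary volume `𝒱̄^{S,F}_ℓ(β; z, ρ)`.  For a crossing edge, the endpoint
outside the ball is the one farther from `z`, at distance `max (ℓ z u) (ℓ z v)`. -/
noncomputable def cvol (c : V × V → ℝ) (ℓ : V → V → ℝ) (S : Finset V) (F : Finset (V × V))
    (z : V) (β ρ : ℝ) : ℝ :=
  β + ∑ p ∈ F.filter
        (fun p => p.1 ∈ S ∧ p.1 ∉ ball ℓ S z ρ ∧ p.2 ∈ S ∧ p.2 ∉ ball ℓ S z ρ),
        c p * ℓ p.1 p.2
    + ∑ p ∈ bdry ℓ S F z ρ, c p * (max (ℓ z p.1) (ℓ z p.2) - ρ)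

/-! ### Auxiliary material for the proof of `stmt_3` -/

open Set

/-- Per-edge volume contribution coefficient at radius `ρ`. -/
noncomputable def eF (L m Mx ρ : ℝ) : ℝ := if Mx ≤ ρ then L else if m ≤ ρ then ρ - m else 0

/-- Continuous minorant of `eF`. -/
noncomputable def uF (L m ρ : ℝ) : ℝ := min L (max 0 (ρ - m))

/-- Continuous minorant of `eF` agreeing with it at `a`. -/
noncomputable def vF (L m Mx a ρ : ℝ) : ℝ := max (eF L m Mx a) (uF L m ρ)

/-- Right derivative of `vF`. -/
noncomputable def dF (L m Mx a ρ : ℝ) : ℝ :=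
  if eF L m Mx a ≤ uF L m ρ ∧ m ≤ ρ ∧ ρ - m < L then 1 else 0

section perEdge

variable {L m Mx a ρ σ : ℝ}

lemma eF_nonneg (hL : 0 ≤ L) : 0 ≤ eF L m Mx ρ := by
  unfold eF; split_ifs with h1 h2 <;> [exact hL; linarith; exact le_rfl]

lemma eF_mono (hL : 0 ≤ L) (hML : Mx ≤ m + L) (h : ρ ≤ σ) : eF L m Mx ρ ≤ eF L m Mx σ := by
  unfold eF
  split_ifs with h1 h2 h3 h4 h5 <;> try linarith

lemma uF_nonneg (hL : 0 ≤ L) : 0 ≤ uF L m ρ := le_min hL (le_max_left _ _)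

lemma uF_mono : Monotone (uF L m) := fun _ _ hst =>
  min_le_min le_rfl (max_le_max le_rfl (by linarith))

lemma uF_cont : Continuous (uF L m) := by
  unfold uF; fun_prop

lemma uF_le_eF (hL : 0 ≤ L) (hmM : m ≤ Mx) : uF L m ρ ≤ eF L m Mx ρ := by
  unfold uF eF
  split_ifs with h1 h2
  · exact min_le_left _ _
  · exact (min_le_right _ _).trans (by rw [max_eq_right] <;> linarith)
  · push_neg at h2
    have : max 0 (ρ - m) = 0 := max_eq_left (by linarith)
    rw [this, min_eq_right hL]

lemma vF_a (hL : 0 ≤ L) (hmM : m ≤ Mx) : vF L m Mx a a = eF L m Mx a :=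
  max_eq_left (uF_le_eF hL hmM)

lemma vF_nonneg (hL : 0 ≤ L) : 0 ≤ vF L m Mx a ρ :=
  (uF_nonneg hL).trans (le_max_right _ _)

lemma vF_mono : Monotone (vF L m Mx a) := fun _ _ hst =>
  max_le_max le_rfl (uF_mono hst)

lemma vF_cont : Continuous (vF L m Mx a) :=
  continuous_const.max uF_cont

lemma vF_le_eF (hL : 0 ≤ L) (hmM : m ≤ Mx) (hML : Mx ≤ m + L) (haρ : a ≤ ρ) :
    vF L m Mx a ρ ≤ eF L m Mx ρ :=
  max_le (eF_mono hL hML haρ) (uF_le_eF hL hmM)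

lemma eF_eq_uF (hL : 0 ≤ L) (hML : Mx ≤ m + L) (haM : a < Mx) : eF L m Mx a = uF L m a := by
  unfold eF uF
  rw [if_neg (by linarith)]
  split_ifs with h2
  · rw [max_eq_right (by linarith), min_eq_right (by linarith)]
  · push_neg at h2
    rw [max_eq_left (by linarith), min_eq_right hL]

lemma dF_nonneg : 0 ≤ dF L m Mx a ρ := by unfold dF; positivity

lemma dF_eq_one (hL : 0 ≤ L) (hML : Mx ≤ m + L) (haρ : a ≤ ρ) (h1 : m ≤ ρ) (h2 : ρ < Mx) :
    dF L m Mx a ρ = 1 := by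
  unfold dF
  rw [if_pos]
  refine ⟨?_, h1, by linarith⟩
  rw [eF_eq_uF hL hML (lt_of_le_of_lt haρ h2)]
  exact uF_mono haρ

lemma uF_hasDeriv (hL : 0 ≤ L) :
    HasDerivWithinAt (uF L m) (if m ≤ ρ ∧ ρ - m < L then 1 else 0) (Ioi ρ) ρ := by
  by_cases h1 : m ≤ ρ
  · by_cases h2 : ρ - m < L
    · rw [if_pos ⟨h1, h2⟩]
      have key : HasDerivWithinAt (fun t => t - m) 1 (Ioi ρ) ρ :=
        (hasDerivWithinAt_id ρ _).sub_const m
      refine key.congr_of_eventuallyEq ?_ ?_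
      · filter_upwards [Ioo_mem_nhdsGT (show ρ < m + L by linarith)] with t ht
        unfold uF
        rw [max_eq_right (by linarith [ht.1]), min_eq_right (by linarith [ht.2])]
      · unfold uF
        rw [max_eq_right (by linarith), min_eq_right (by linarith)]
    · rw [if_neg (by tauto)]
      push_neg at h2
      refine (hasDerivWithinAt_const ρ _ L).congr (fun t ht => ?_) ?_
      · unfold uF
        rw [max_eq_right (by simp at ht; linarith), min_eq_left (by simp at ht; linarith)]
      · unfold uF
        rw [max_eq_right (by linarith), min_eq_left (by linarith)]
  · rw [if_neg (by tauto)]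
    push_neg at h1
    refine (hasDerivWithinAt_const ρ _ 0).congr_of_eventuallyEq ?_ ?_
    · filter_upwards [Ioo_mem_nhdsGT h1] with t ht
      unfold uF
      rw [max_eq_left (by linarith [ht.2]), min_eq_right hL]
    · unfold uF
      rw [max_eq_left (by linarith), min_eq_right hL]

lemma vF_hasDeriv (hL : 0 ≤ L) :
    HasDerivWithinAt (vF L m Mx a) (dF L m Mx a ρ) (Ioi ρ) ρ := by
  by_cases h1 : eF L m Mx a ≤ uF L m ρ
  · have : dF L m Mx a ρ = if m ≤ ρ ∧ ρ - m < L then 1 else 0 := by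
      unfold dF
      by_cases h : m ≤ ρ ∧ ρ - m < L <;> simp [h, h1]
    rw [this]
    refine (uF_hasDeriv hL).congr (fun t ht => ?_) ?_
    · exact max_eq_right (h1.trans (uF_mono (le_of_lt ht)))
    · exact max_eq_right h1
  · have hd : dF L m Mx a ρ = 0 := by unfold dF; rw [if_neg (by tauto)]
    rw [hd]
    push_neg at h1
    refine (hasDerivWithinAt_const ρ _ (eF L m Mx a)).congr_of_eventuallyEq ?_ ?_
    · have hev : ∀ᶠ t in nhds ρ, uF L m t < eF L m Mx a :=
        (uF_cont.continuousAt).eventually_lt continuousAt_const h1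
      filter_upwards [nhdsWithin_le_nhds hev] with t ht
      exact max_eq_left ht.le
    · exact max_eq_left h1.le

end perEdge

lemma bdry_eq (ℓ : V → V → ℝ) (S : Finset V) (F : Finset (V × V)) (z : V) (ρ : ℝ) :
    bdry ℓ S F z ρ = (F.filter (fun p => p.1 ∈ S ∧ p.2 ∈ S)).filter
      (fun p => min (ℓ z p.1) (ℓ z p.2) ≤ ρ ∧ ¬ max (ℓ z p.1) (ℓ z p.2) ≤ ρ) := by
  unfold bdry
  rw [Finset.filter_filter]
  apply Finset.filter_congr
  intro p _
  by_cases hA : ℓ z p.1 ≤ ρ <;> by_cases hB : ℓ z p.2 ≤ ρ <;>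
    simp [hA, hB, min_le_iff, max_le_iff]

lemma inner_eq (ℓ : V → V → ℝ) (S : Finset V) (F : Finset (V × V)) (z : V) (ρ : ℝ) :
    F.filter (fun p => p.1 ∈ ball ℓ S z ρ ∧ p.2 ∈ ball ℓ S z ρ) =
      (F.filter (fun p => p.1 ∈ S ∧ p.2 ∈ S)).filter
        (fun p => max (ℓ z p.1) (ℓ z p.2) ≤ ρ) := by
  unfold ball
  rw [Finset.filter_filter]
  apply Finset.filter_congr
  intro p _
  simp only [Finset.mem_filter, max_le_iff]
  tauto

lemma vol_eq (c : V × V → ℝ) (ℓ : V → V → ℝ) (S : Finset V) (F : Finset (V × V))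
    (z : V) (β ρ : ℝ) :
    vol c ℓ S F z β ρ = β + ∑ p ∈ F.filter (fun p => p.1 ∈ S ∧ p.2 ∈ S),
      c p * eF (ℓ p.1 p.2) (min (ℓ z p.1) (ℓ z p.2)) (max (ℓ z p.1) (ℓ z p.2)) ρ := by
  unfold vol
  rw [bdry_eq, inner_eq]
  set F' := F.filter (fun p => p.1 ∈ S ∧ p.2 ∈ S) with hF'
  have e1 : ∑ p ∈ F'.filter (fun p => max (ℓ z p.1) (ℓ z p.2) ≤ ρ), c p * ℓ p.1 p.2
      = ∑ p ∈ F', if max (ℓ z p.1) (ℓ z p.2) ≤ ρ then c p * ℓ p.1 p.2 else 0 :=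
    Finset.sum_filter _ _
  have e2 : ∑ p ∈ F'.filter
        (fun p => min (ℓ z p.1) (ℓ z p.2) ≤ ρ ∧ ¬ max (ℓ z p.1) (ℓ z p.2) ≤ ρ),
        c p * (ρ - min (ℓ z p.1) (ℓ z p.2))
      = ∑ p ∈ F', if min (ℓ z p.1) (ℓ z p.2) ≤ ρ ∧ ¬ max (ℓ z p.1) (ℓ z p.2) ≤ ρ
          then c p * (ρ - min (ℓ z p.1) (ℓ z p.2)) else 0 :=
    Finset.sum_filter _ _
  rw [e1, e2, add_assoc, ← Finset.sum_add_distrib]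
  congr 1
  apply Finset.sum_congr rfl
  intro p _
  unfold eF
  by_cases h1 : max (ℓ z p.1) (ℓ z p.2) ≤ ρ <;>
    by_cases h2 : min (ℓ z p.1) (ℓ z p.2) ≤ ρ <;>
      simp [h1, h2]

lemma deriv_algebra {A W Lg d : ℝ} (hW : W ≠ 0) (hLg : Lg ≠ 0) (hA : A ≠ 0) :
    d * (W * Lg)⁻¹ = -(Lg⁻¹ * ((A * W⁻¹)⁻¹ * (A * (-d / W ^ 2)))) := by
  field_simp

lemma one_le_log {M x : ℝ} (hx : 0 < x) (hxM : x ≤ M) :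
    1 ≤ Real.log (Real.exp 1 * M / x) := by
  have h : Real.exp 1 ≤ Real.exp 1 * M / x := by
    rw [le_div_iff₀ hx]
    nlinarith [Real.exp_pos 1]
  calc 1 = Real.log (Real.exp 1) := (Real.log_exp 1).symm
    _ ≤ _ := Real.log_le_log (Real.exp_pos 1) h

lemma xlog_mono {M x y : ℝ} (hx : 0 < x) (hxy : x ≤ y) (hyM : y ≤ M) :
    x * Real.log (Real.exp 1 * M / x) ≤ y * Real.log (Real.exp 1 * M / y) := by
  have hM : 0 < M := lt_of_lt_of_le (lt_of_lt_of_le hx hxy) hyM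
  set C := Real.log (Real.exp 1 * M) with hC
  have hCe : C = 1 + Real.log M := by
    rw [hC, Real.log_mul (Real.exp_ne_zero 1) hM.ne', Real.log_exp]
  set g : ℝ → ℝ := fun t => t * (C - Real.log t) with hg
  have hlog : ∀ t : ℝ, 0 < t → Real.log (Real.exp 1 * M / t) = C - Real.log t := by
    intro t ht
    rw [Real.log_div (by positivity) ht.ne']
  rw [hlog x hx, hlog y (hx.trans_le hxy)]
  have hmono : MonotoneOn g (Icc x y) := by
    have hder : ∀ t ∈ interior (Icc x y), HasDerivAt g (Real.log M - Real.log t) t := by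
      intro t ht
      rw [interior_Icc] at ht
      have ht0 : 0 < t := hx.trans ht.1
      have h1 : HasDerivAt (fun t : ℝ => C - Real.log t) (-t⁻¹) t :=
        (Real.hasDerivAt_log ht0.ne').const_sub C
      have := (hasDerivAt_id t).mul h1
      refine this.congr_deriv ?_
      simp only [id]
      rw [hCe, mul_neg, mul_inv_cancel₀ ht0.ne']
      ring
    apply monotoneOn_of_deriv_nonneg (convex_Icc x y)
    · apply ContinuousOn.mul continuousOn_id
      apply ContinuousOn.sub continuousOn_const
      apply Real.continuousOn_log.mono
      intro t ht
      exact (hx.trans_le ht.1).ne'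
    · intro t ht
      exact (hder t ht).differentiableAt.differentiableWithinAt
    · intro t ht
      rw [(hder t ht).deriv]
      have h2 : t ≤ M := by rw [interior_Icc] at ht; linarith [ht.2]
      have := Real.log_le_log (hx.trans (by rw [interior_Icc] at ht; exact ht.1)) h2
      linarith
  exact hmono (left_mem_Icc.mpr hxy) (right_mem_Icc.mpr hxy) hxy

/-- Region-growing lemma, ball-volume bound:
`∫_a^b c(∂F(ρ)) / (Vol(ρ)·ln(e·Vol(b)/Vol(ρ))) dρ ≤ ln ln (e·Vol(b)/Vol(a))`. -/
theorem stmt_3 [Fintype V] (E F : Finset (V × V)) (hFE : F ⊆ E)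
    (c : V × V → ℝ) (hc : ∀ p, 0 ≤ c p)
    (ℓ : V → V → ℝ) (hℓ0 : ∀ v, ℓ v v = 0) (hℓnn : ∀ u v, 0 ≤ ℓ u v)
    (hℓsymm : ∀ u v, ℓ u v = ℓ v u)
    (hℓtri : ∀ u v w, ℓ u w ≤ ℓ u v + ℓ v w)
    (S : Finset V) (z : V) (β : ℝ) (hβ : 0 < β)
    (a b : ℝ) (ha : 0 ≤ a) (hab : a < b) :
    (∫ ρ in a..b, (∑ p ∈ bdry ℓ S F z ρ, c p) /
        (vol c ℓ S F z β ρ * Real.log (Real.exp 1 * vol c ℓ S F z β b / vol c ℓ S F z β ρ))) ≤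
      Real.log (Real.log (Real.exp 1 * vol c ℓ S F z β b / vol c ℓ S F z β a)) := by
  classical
  set F' := F.filter (fun p => p.1 ∈ S ∧ p.2 ∈ S) with hF'
  have hLnn : ∀ p : V × V, 0 ≤ ℓ p.1 p.2 := fun p => hℓnn _ _
  have hmM : ∀ p : V × V, min (ℓ z p.1) (ℓ z p.2) ≤ max (ℓ z p.1) (ℓ z p.2) :=
    fun p => min_le_max
  have hML : ∀ p : V × V,
      max (ℓ z p.1) (ℓ z p.2) ≤ min (ℓ z p.1) (ℓ z p.2) + ℓ p.1 p.2 := by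
    intro p
    apply max_le
    · rcases le_total (ℓ z p.1) (ℓ z p.2) with h | h
      · rw [min_eq_left h]; linarith [hℓnn p.1 p.2]
      · rw [min_eq_right h]
        have := hℓtri z p.2 p.1
        rw [hℓsymm p.2 p.1] at this
        linarith
    · rcases le_total (ℓ z p.1) (ℓ z p.2) with h | h
      · rw [min_eq_left h]
        have := hℓtri z p.1 p.2
        linarith
      · rw [min_eq_right h]; linarith [hℓnn p.1 p.2]
  set M := vol c ℓ S F z β b with hM
  have hvol : ∀ ρ, vol c ℓ S F z β ρ = β + ∑ p ∈ F',
      c p * eF (ℓ p.1 p.2) (min (ℓ z p.1) (ℓ z p.2)) (max (ℓ z p.1) (ℓ z p.2)) ρ :=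
    fun ρ => vol_eq c ℓ S F z β ρ
  set w : ℝ → ℝ := fun ρ => β + ∑ p ∈ F',
      c p * vF (ℓ p.1 p.2) (min (ℓ z p.1) (ℓ z p.2)) (max (ℓ z p.1) (ℓ z p.2)) a ρ with hw
  have hwβ : ∀ ρ, β ≤ w ρ := by
    intro ρ
    have : (0:ℝ) ≤ ∑ p ∈ F',
        c p * vF (ℓ p.1 p.2) (min (ℓ z p.1) (ℓ z p.2)) (max (ℓ z p.1) (ℓ z p.2)) a ρ :=
      Finset.sum_nonneg fun p _ => mul_nonneg (hc p) (vF_nonneg (hLnn p))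
    simp only [hw]
    linarith
  have hwpos : ∀ ρ, 0 < w ρ := fun ρ => lt_of_lt_of_le hβ (hwβ ρ)
  have hwmono : Monotone w := by
    intro s t hst
    simp only [hw]
    apply add_le_add le_rfl
    exact Finset.sum_le_sum fun p _ => mul_le_mul_of_nonneg_left (vF_mono hst) (hc p)
  have hwcont : Continuous w := by
    apply continuous_const.add
    exact continuous_finset_sum _ fun p _ => continuous_const.mul vF_cont
  have hwa : w a = vol c ℓ S F z β a := by
    rw [hvol a]
    simp only [hw]
    congr 1
    exact Finset.sum_congr rfl fun p _ => by rw [vF_a (hLnn p) (hmM p)]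
  have hwle : ∀ ρ, a ≤ ρ → w ρ ≤ vol c ℓ S F z β ρ := by
    intro ρ hρ
    rw [hvol ρ]
    simp only [hw]
    apply add_le_add le_rfl
    exact Finset.sum_le_sum fun p _ =>
      mul_le_mul_of_nonneg_left (vF_le_eF (hLnn p) (hmM p) (hML p) hρ) (hc p)
  have hvolmono : ∀ ρ σ : ℝ, ρ ≤ σ → vol c ℓ S F z β ρ ≤ vol c ℓ S F z β σ := by
    intro ρ σ h
    rw [hvol ρ, hvol σ]
    apply add_le_add le_rfl
    exact Finset.sum_le_sum fun p _ =>
      mul_le_mul_of_nonneg_left (eF_mono (hLnn p) (hML p) h) (hc p)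
  have hwbM : w b ≤ M := hwle b hab.le
  have hwleM : ∀ ρ, ρ ≤ b → w ρ ≤ M := fun ρ h => (hwmono h).trans hwbM
  have hMpos : 0 < M := lt_of_lt_of_le (hwpos b) hwbM
  have hlogw : ∀ ρ, ρ ≤ b → 1 ≤ Real.log (Real.exp 1 * M / w ρ) :=
    fun ρ h => one_le_log (hwpos ρ) (hwleM ρ h)
  have hvapos : 0 < vol c ℓ S F z β a := hwa ▸ hwpos a
  have hvaM : vol c ℓ S F z β a ≤ M := hvolmono a b hab.le
  by_cases hInt : IntervalIntegrable (fun ρ => (∑ p ∈ bdry ℓ S F z ρ, c p) /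
      (vol c ℓ S F z β ρ * Real.log (Real.exp 1 * M / vol c ℓ S F z β ρ)))
      MeasureTheory.volume a b
  swap
  · rw [intervalIntegral.integral_undef hInt]
    exact Real.log_nonneg (one_le_log hvapos hvaM)
  · set D : ℝ → ℝ := fun ρ => ∑ p ∈ F',
        c p * dF (ℓ p.1 p.2) (min (ℓ z p.1) (ℓ z p.2)) (max (ℓ z p.1) (ℓ z p.2)) a ρ with hD
    set g : ℝ → ℝ := fun ρ => -Real.log (Real.log (Real.exp 1 * M / w ρ)) with hg
    set g' : ℝ → ℝ := fun ρ => D ρ / (w ρ * Real.log (Real.exp 1 * M / w ρ)) with hg'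
    have hDnn : ∀ x, 0 ≤ D x := fun x =>
      Finset.sum_nonneg fun p _ => mul_nonneg (hc p) dF_nonneg
    have hcont : ContinuousOn g (Icc a b) := by
      simp only [hg]
      apply ContinuousOn.neg
      intro ρ hρ
      have hf : ContinuousAt (fun ρ => Real.exp 1 * M / w ρ) ρ :=
        (continuous_const.div hwcont fun t => (hwpos t).ne').continuousAt
      have h1 : ContinuousAt (fun ρ => Real.log (Real.exp 1 * M / w ρ)) ρ :=
        ContinuousAt.comp (g := Real.log) (f := fun ρ => Real.exp 1 * M / w ρ)
          (Real.continuousAt_log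
            (div_pos (mul_pos (Real.exp_pos 1) hMpos) (hwpos ρ)).ne') hf
      have h2 : ContinuousAt (fun ρ => Real.log (Real.log (Real.exp 1 * M / w ρ))) ρ :=
        ContinuousAt.comp (g := Real.log)
          (f := fun ρ => Real.log (Real.exp 1 * M / w ρ))
          (Real.continuousAt_log (lt_of_lt_of_le one_pos (hlogw ρ hρ.2)).ne') h1
      exact h2.continuousWithinAt
    have hderiv : ∀ x ∈ Ioo a b, HasDerivWithinAt g (g' x) (Ioi x) x := by
      intro x hx
      have hDw : HasDerivWithinAt w (D x) (Ioi x) x := by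
        simp only [hw, hD]
        apply HasDerivWithinAt.const_add
        exact HasDerivWithinAt.fun_sum fun p _ => (vF_hasDeriv (hLnn p)).const_mul (c p)
      have hw0 : w x ≠ 0 := (hwpos x).ne'
      have h1 := hDw.inv hw0
      have h2 := h1.const_mul (Real.exp 1 * M)
      have harg : (0:ℝ) < Real.exp 1 * M * (w x)⁻¹ :=
        mul_pos (mul_pos (Real.exp_pos 1) hMpos) (inv_pos.mpr (hwpos x))
      have h3 := (Real.hasDerivAt_log harg.ne').comp_hasDerivWithinAt x h2
      have hlogpos : 0 < Real.log (Real.exp 1 * M * (w x)⁻¹) := by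
        rw [← div_eq_mul_inv]
        exact lt_of_lt_of_le one_pos (hlogw x hx.2.le)
      have h4 := (Real.hasDerivAt_log hlogpos.ne').comp_hasDerivWithinAt x h3
      have h5 := h4.neg
      have hem : Real.exp 1 * M ≠ 0 := (mul_pos (Real.exp_pos 1) hMpos).ne'
      simp only [hg, hg', div_eq_mul_inv]
      simp only [Function.comp_def] at h5
      refine h5.congr_deriv ?_
      exact (deriv_algebra hw0 hlogpos.ne' hem).symm
    have hφg : ∀ x ∈ Ioo a b, (∑ p ∈ bdry ℓ S F z x, c p) /
        (vol c ℓ S F z β x * Real.log (Real.exp 1 * M / vol c ℓ S F z β x)) ≤ g' x := by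
      intro x hx
      have hax : a ≤ x := hx.1.le
      have hxb : x ≤ b := hx.2.le
      have hwv : w x ≤ vol c ℓ S F z β x := hwle x hax
      have hvM : vol c ℓ S F z β x ≤ M := hvolmono x b hxb
      have hden : w x * Real.log (Real.exp 1 * M / w x) ≤
          vol c ℓ S F z β x * Real.log (Real.exp 1 * M / vol c ℓ S F z β x) :=
        xlog_mono (hwpos x) hwv hvM
      have hdenpos : 0 < w x * Real.log (Real.exp 1 * M / w x) :=
        mul_pos (hwpos x) (lt_of_lt_of_le one_pos (hlogw x hxb))
      have hnum : ∑ p ∈ bdry ℓ S F z x, c p ≤ D x := by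
        rw [bdry_eq, ← hF', hD]
        have := fun (p : V × V) (hp : p ∈ F'.filter (fun p =>
            min (ℓ z p.1) (ℓ z p.2) ≤ x ∧ ¬ max (ℓ z p.1) (ℓ z p.2) ≤ x)) => hp
        calc ∑ p ∈ F'.filter (fun p =>
              min (ℓ z p.1) (ℓ z p.2) ≤ x ∧ ¬ max (ℓ z p.1) (ℓ z p.2) ≤ x), c p
            = ∑ p ∈ F'.filter (fun p =>
              min (ℓ z p.1) (ℓ z p.2) ≤ x ∧ ¬ max (ℓ z p.1) (ℓ z p.2) ≤ x),
              c p * dF (ℓ p.1 p.2) (min (ℓ z p.1) (ℓ z p.2)) (max (ℓ z p.1) (ℓ z p.2)) a x := by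
              apply Finset.sum_congr rfl
              intro p hp
              rw [Finset.mem_filter] at hp
              rw [dF_eq_one (hLnn p) (hML p) hax hp.2.1 (lt_of_not_ge hp.2.2), mul_one]
          _ ≤ _ := Finset.sum_le_sum_of_subset_of_nonneg (Finset.filter_subset _ _)
              (fun p _ _ => mul_nonneg (hc p) dF_nonneg)
      calc (∑ p ∈ bdry ℓ S F z x, c p) /
            (vol c ℓ S F z β x * Real.log (Real.exp 1 * M / vol c ℓ S F z β x))
          ≤ D x / (w x * Real.log (Real.exp 1 * M / w x)) :=
            div_le_div₀ (hDnn x) hnum hdenpos hden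
        _ = g' x := rfl
    have φint : MeasureTheory.IntegrableOn (fun ρ => (∑ p ∈ bdry ℓ S F z ρ, c p) /
        (vol c ℓ S F z β ρ * Real.log (Real.exp 1 * M / vol c ℓ S F z β ρ))) (Icc a b) :=
      (intervalIntegrable_iff_integrableOn_Icc_of_le hab.le).mp hInt
    have key := intervalIntegral.integral_le_sub_of_hasDeriv_right_of_le hab.le hcont hderiv
      φint hφg
    calc (∫ ρ in a..b, (∑ p ∈ bdry ℓ S F z ρ, c p) /
          (vol c ℓ S F z β ρ * Real.log (Real.exp 1 * M / vol c ℓ S F z β ρ)))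
        ≤ g b - g a := key
      _ = Real.log (Real.log (Real.exp 1 * M / w a))
          - Real.log (Real.log (Real.exp 1 * M / w b)) := by simp only [hg]; ring
      _ ≤ Real.log (Real.log (Real.exp 1 * M / w a)) := by
          have := Real.log_nonneg (hlogw b le_rfl)
          linarith
      _ = Real.log (Real.log (Real.exp 1 * M / vol c ℓ S F z β a)) := by rw [hwa]

end RegionGrow
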